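/- There exists a constant C₀ ≥ 1 with the following property. Let ρ > 0, 0 < δ ≤ 1 with δ < ρ, and M ≥ 0 with M ≤ δ/(2 e C₀). Let A : ℤ × ℤ → ℂ satisfy |A(i,j)| ≤ M e^{−ρ|i−j|} for all i, j. Define the matrix powers inductively by A¹ = A and A^{m+1}(i,j) = ∑_{k∈ℤ} A^m(i,k) A(k,j). Then all of these series converge absolutely, and for every (i,j) the series B(i,j) := ∑_{m≥1} A^m(i,j)/m! converges absolutely with |B(i,j)| ≤ 2 M e^{−(ρ−δ)|i−j|}. -/

import Mathlib

open Real

/-- Powers of a bilateral infinite complex matrix, defined entrywise: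
`matPow A 1 = A` and `matPow A (m+1) (i,j) = ∑_{k ∈ ℤ} matPow A m (i,k) · A (k,j)`. -/
noncomputable def matPow (A : ℤ → ℤ → ℂ) : ℕ → ℤ → ℤ → ℂ
  | 0 => fun i j => if i = j then 1 else 0
  | 1 => A
  | m + 2 => fun i j => ∑' k : ℤ, matPow A (m + 1) i k * A k j

lemma exp_summable (c : ℝ) (hc : 0 < c) (j : ℤ) :
    Summable (fun k : ℤ => Real.exp (-c * |(k : ℝ) - (j : ℝ)|)) := by
  have h0 : Summable (fun k : ℤ => Real.exp (-c * |(k : ℝ)|)) := by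
    have hr : Real.exp (-c) < 1 := Real.exp_lt_one_iff.mpr (by linarith)
    have hr0 : 0 ≤ Real.exp (-c) := (Real.exp_pos _).le
    have hnat : Summable (fun n : ℕ => Real.exp (-c) ^ n) :=
      summable_geometric_of_lt_one hr0 hr
    apply Summable.of_nat_of_neg
    · refine hnat.congr fun n => ?_
      rw [← Real.exp_nat_mul]
      congr 1
      push_cast
      rw [abs_of_nonneg (by positivity)]
      ring
    · refine hnat.congr fun n => ?_
      rw [← Real.exp_nat_mul]
      congr 1
      push_cast
      rw [abs_neg, abs_of_nonneg (by positivity)]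
      ring
  have hinj : Function.Injective (fun x : ℤ => x - j) := fun a b h => by
    simpa using congrArg (· + j) h
  have := h0.comp_injective hinj
  refine this.congr fun k => ?_
  simp

lemma exp_tsum_le (c : ℝ) (hc : 0 < c) (hc1 : c ≤ 1) (j : ℤ) :
    (∑' k : ℤ, Real.exp (-c * |(k : ℝ) - (j : ℝ)|)) ≤ 2 * Real.exp 1 / c := by
  have hr : Real.exp (-c) < 1 := Real.exp_lt_one_iff.mpr (by linarith)
  have hr0 : 0 ≤ Real.exp (-c) := (Real.exp_pos _).le
  have hnat : Summable (fun n : ℕ => Real.exp (-c) ^ n) :=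
    summable_geometric_of_lt_one hr0 hr
  have hpos : (fun n : ℕ => Real.exp (-c * |(((n : ℤ)) : ℝ)|)) = fun n : ℕ => Real.exp (-c) ^ n := by
    funext n
    rw [← Real.exp_nat_mul]
    congr 1
    push_cast
    rw [abs_of_nonneg (by positivity)]
    ring
  have hneg : (fun n : ℕ => Real.exp (-c * |(((-n : ℤ)) : ℝ)|)) = fun n : ℕ => Real.exp (-c) ^ n := by
    funext n
    rw [← Real.exp_nat_mul]
    congr 1
    push_cast
    rw [abs_neg, abs_of_nonneg (by positivity)]
    ring
  have key : (∑' k : ℤ, Real.exp (-c * |(k : ℝ)|)) ≤ 2 * Real.exp 1 / c := by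
    rw [Summable.tsum_of_nat_of_neg (by rw [hpos]; exact hnat) (by rw [hneg]; exact hnat)]
    rw [hpos, hneg, tsum_geometric_of_lt_one hr0 hr]
    have h1 : c / Real.exp 1 ≤ 1 - Real.exp (-c) := by
      have h2 : c + 1 ≤ Real.exp c := Real.add_one_le_exp c
      have h3 : Real.exp c ≤ Real.exp 1 := Real.exp_le_exp.mpr hc1
      have h4 : Real.exp (-c) = 1 / Real.exp c := by
        rw [Real.exp_neg]; ring
      rw [h4]
      rw [div_le_iff₀ (Real.exp_pos 1)]
      have h5 : (1 - 1 / Real.exp c) * Real.exp c = Real.exp c - 1 := by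
        field_simp
      calc c ≤ Real.exp c - 1 := by linarith
        _ = (1 - 1 / Real.exp c) * Real.exp c := h5.symm
        _ ≤ (1 - 1 / Real.exp c) * Real.exp 1 := by
            apply mul_le_mul_of_nonneg_left h3
            have : 1 / Real.exp c ≤ 1 := by
              rw [div_le_one (Real.exp_pos c)]; linarith
            linarith
    have h1r : 1 - Real.exp (-c) > 0 := by linarith
    have hcexp : c / Real.exp 1 > 0 := by positivity
    have : (1 - Real.exp (-c))⁻¹ ≤ (c / Real.exp 1)⁻¹ := by
      exact inv_anti₀ hcexp h1
    have habs0 : Real.exp (-c * |((0:ℤ) : ℝ)|) = 1 := by simp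
    rw [habs0]
    have h6 : (1 - Real.exp (-c))⁻¹ ≤ Real.exp 1 / c := by
      rwa [inv_div] at this
    have h7 : 2 * Real.exp 1 / c = 2 * (Real.exp 1 / c) := by ring
    linarith
  calc (∑' k : ℤ, Real.exp (-c * |(k : ℝ) - (j : ℝ)|))
      = ∑' k : ℤ, Real.exp (-c * |((Equiv.subRight j k : ℤ) : ℝ)|) := by
        apply tsum_congr; intro k; simp [Equiv.subRight]
    _ = ∑' k : ℤ, Real.exp (-c * |(k : ℝ)|) := Equiv.tsum_eq (Equiv.subRight j) (fun k : ℤ => Real.exp (-c * |(k : ℝ)|))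
    _ ≤ 2 * Real.exp 1 / c := key

lemma conv_lemma (ρ δ : ℝ) (hδ : 0 < δ) (hδ1 : δ ≤ 1) (hδρ : δ < ρ) (i j : ℤ) :
    Summable (fun k : ℤ => Real.exp (-(ρ - δ) * |(i : ℝ) - (k : ℝ)|) *
      Real.exp (-ρ * |(k : ℝ) - (j : ℝ)|)) ∧
    (∑' k : ℤ, Real.exp (-(ρ - δ) * |(i : ℝ) - (k : ℝ)|) * Real.exp (-ρ * |(k : ℝ) - (j : ℝ)|)) ≤
      (2 * Real.exp 1 / δ) * Real.exp (-(ρ - δ) * |(i : ℝ) - (j : ℝ)|) := by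
  have hpt : ∀ k : ℤ, Real.exp (-(ρ - δ) * |(i : ℝ) - (k : ℝ)|) *
      Real.exp (-ρ * |(k : ℝ) - (j : ℝ)|) ≤
      Real.exp (-(ρ - δ) * |(i : ℝ) - (j : ℝ)|) * Real.exp (-δ * |(k : ℝ) - (j : ℝ)|) := by
    intro k
    rw [← Real.exp_add, ← Real.exp_add]
    apply Real.exp_le_exp.mpr
    have htri : |(i : ℝ) - (j : ℝ)| ≤ |(i : ℝ) - (k : ℝ)| + |(k : ℝ) - (j : ℝ)| :=
      abs_sub_le _ _ _
    have hmul : (ρ - δ) * |(i : ℝ) - (j : ℝ)| ≤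
        (ρ - δ) * (|(i : ℝ) - (k : ℝ)| + |(k : ℝ) - (j : ℝ)|) :=
      mul_le_mul_of_nonneg_left htri (by linarith)
    have h2 : 0 ≤ |(k : ℝ) - (j : ℝ)| := abs_nonneg _
    nlinarith
  have hg : Summable (fun k : ℤ => Real.exp (-(ρ - δ) * |(i : ℝ) - (j : ℝ)|) *
      Real.exp (-δ * |(k : ℝ) - (j : ℝ)|)) :=
    (exp_summable δ hδ j).mul_left _
  have hnn : ∀ k : ℤ, 0 ≤ Real.exp (-(ρ - δ) * |(i : ℝ) - (k : ℝ)|) *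
      Real.exp (-ρ * |(k : ℝ) - (j : ℝ)|) := fun k => by positivity
  have hsumm : Summable (fun k : ℤ => Real.exp (-(ρ - δ) * |(i : ℝ) - (k : ℝ)|) *
      Real.exp (-ρ * |(k : ℝ) - (j : ℝ)|)) :=
    Summable.of_nonneg_of_le hnn hpt hg
  refine ⟨hsumm, ?_⟩
  calc (∑' k : ℤ, Real.exp (-(ρ - δ) * |(i : ℝ) - (k : ℝ)|) * Real.exp (-ρ * |(k : ℝ) - (j : ℝ)|))
      ≤ ∑' k : ℤ, Real.exp (-(ρ - δ) * |(i : ℝ) - (j : ℝ)|) * Real.exp (-δ * |(k : ℝ) - (j : ℝ)|) :=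
        Summable.tsum_le_tsum hpt hsumm hg
    _ = Real.exp (-(ρ - δ) * |(i : ℝ) - (j : ℝ)|) * ∑' k : ℤ, Real.exp (-δ * |(k : ℝ) - (j : ℝ)|) :=
        tsum_mul_left
    _ ≤ Real.exp (-(ρ - δ) * |(i : ℝ) - (j : ℝ)|) * (2 * Real.exp 1 / δ) := by
        apply mul_le_mul_of_nonneg_left (exp_tsum_le δ hδ hδ1 j) (Real.exp_pos _).le
    _ = (2 * Real.exp 1 / δ) * Real.exp (-(ρ - δ) * |(i : ℝ) - (j : ℝ)|) := by ring

section Main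
variable (ρ δ M : ℝ) (A : ℤ → ℤ → ℂ)

lemma pow_bound (hδ : 0 < δ) (hδ1 : δ ≤ 1) (hδρ : δ < ρ) (hM0 : 0 ≤ M)
    (hMS : M * (2 * Real.exp 1 / δ) ≤ 1 / 2)
    (hA : ∀ i j : ℤ, ‖A i j‖ ≤ M * Real.exp (-ρ * |(i : ℝ) - (j : ℝ)|)) :
    ∀ m : ℕ, 1 ≤ m → ∀ i j : ℤ,
      ‖matPow A m i j‖ ≤ M * (1 / 2 : ℝ) ^ (m - 1) * Real.exp (-(ρ - δ) * |(i : ℝ) - (j : ℝ)|) := by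
  intro m hm
  induction m, hm using Nat.le_induction with
  | base =>
    intro i j
    have h1 : ‖matPow A 1 i j‖ = ‖A i j‖ := by rw [matPow]
    rw [h1]
    refine (hA i j).trans ?_
    have hp : (1 / 2 : ℝ) ^ (1 - 1) = 1 := by norm_num
    rw [hp, mul_one]
    apply mul_le_mul_of_nonneg_left _ hM0
    apply Real.exp_le_exp.mpr
    have := abs_nonneg ((i : ℝ) - (j : ℝ))
    nlinarith
  | succ m hm ih =>
    intro i j
    obtain ⟨n, rfl⟩ : ∃ n, m = n + 1 := ⟨m - 1, (Nat.succ_pred_eq_of_pos hm).symm⟩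
    have hdef : matPow A (n + 2) i j = ∑' k : ℤ, matPow A (n + 1) i k * A k j := by
      rw [matPow]
    set C : ℝ := M * (1 / 2 : ℝ) ^ n * M with hC
    have hCnn : 0 ≤ C := by positivity
    have hconv := conv_lemma ρ δ hδ hδ1 hδρ i j
    have hterm : ∀ k : ℤ, ‖matPow A (n + 1) i k * A k j‖ ≤
        C * (Real.exp (-(ρ - δ) * |(i : ℝ) - (k : ℝ)|) * Real.exp (-ρ * |(k : ℝ) - (j : ℝ)|)) := by
      intro k
      rw [norm_mul]
      have h1 := ih i k
      simp only [Nat.add_sub_cancel] at h1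
      have h2 := hA k j
      calc ‖matPow A (n + 1) i k‖ * ‖A k j‖
          ≤ (M * (1 / 2 : ℝ) ^ n * Real.exp (-(ρ - δ) * |(i : ℝ) - (k : ℝ)|)) *
            (M * Real.exp (-ρ * |(k : ℝ) - (j : ℝ)|)) :=
            mul_le_mul h1 h2 (norm_nonneg _) (by positivity)
        _ = C * (Real.exp (-(ρ - δ) * |(i : ℝ) - (k : ℝ)|) *
              Real.exp (-ρ * |(k : ℝ) - (j : ℝ)|)) := by ring
    have hgsum : Summable (fun k : ℤ => C * (Real.exp (-(ρ - δ) * |(i : ℝ) - (k : ℝ)|) *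
        Real.exp (-ρ * |(k : ℝ) - (j : ℝ)|))) := hconv.1.mul_left _
    have hnsum : Summable (fun k : ℤ => ‖matPow A (n + 1) i k * A k j‖) :=
      Summable.of_nonneg_of_le (fun k => norm_nonneg _) hterm hgsum
    rw [hdef]
    calc ‖∑' k : ℤ, matPow A (n + 1) i k * A k j‖
        ≤ ∑' k : ℤ, ‖matPow A (n + 1) i k * A k j‖ := norm_tsum_le_tsum_norm hnsum
      _ ≤ ∑' k : ℤ, C * (Real.exp (-(ρ - δ) * |(i : ℝ) - (k : ℝ)|) *
            Real.exp (-ρ * |(k : ℝ) - (j : ℝ)|)) := Summable.tsum_le_tsum hterm hnsum hgsum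
      _ = C * ∑' k : ℤ, Real.exp (-(ρ - δ) * |(i : ℝ) - (k : ℝ)|) *
            Real.exp (-ρ * |(k : ℝ) - (j : ℝ)|) := tsum_mul_left
      _ ≤ C * ((2 * Real.exp 1 / δ) * Real.exp (-(ρ - δ) * |(i : ℝ) - (j : ℝ)|)) :=
          mul_le_mul_of_nonneg_left hconv.2 hCnn
      _ ≤ M * (1 / 2 : ℝ) ^ (n + 1 + 1 - 1) * Real.exp (-(ρ - δ) * |(i : ℝ) - (j : ℝ)|) := by
          simp only [Nat.add_sub_cancel]
          have hexp := (Real.exp_pos (-(ρ - δ) * |(i : ℝ) - (j : ℝ)|)).le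
          have key : C * (2 * Real.exp 1 / δ) ≤ M * (1 / 2 : ℝ) ^ (n + 1) := by
            have h3 : C * (2 * Real.exp 1 / δ) = (M * (1 / 2 : ℝ) ^ n) * (M * (2 * Real.exp 1 / δ)) := by
              rw [hC]; ring
            have h4 : (0:ℝ) ≤ M * (1 / 2 : ℝ) ^ n := by positivity
            calc C * (2 * Real.exp 1 / δ)
                = (M * (1 / 2 : ℝ) ^ n) * (M * (2 * Real.exp 1 / δ)) := h3
              _ ≤ (M * (1 / 2 : ℝ) ^ n) * (1 / 2) := mul_le_mul_of_nonneg_left hMS h4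
              _ = M * (1 / 2 : ℝ) ^ (n + 1) := by rw [pow_succ]; ring
          calc C * ((2 * Real.exp 1 / δ) * Real.exp (-(ρ - δ) * |(i : ℝ) - (j : ℝ)|))
              = (C * (2 * Real.exp 1 / δ)) * Real.exp (-(ρ - δ) * |(i : ℝ) - (j : ℝ)|) := by ring
            _ ≤ M * (1 / 2 : ℝ) ^ (n + 1) * Real.exp (-(ρ - δ) * |(i : ℝ) - (j : ℝ)|) :=
                mul_le_mul_of_nonneg_right key hexp

lemma pow_summable (hδ : 0 < δ) (hδ1 : δ ≤ 1) (hδρ : δ < ρ) (hM0 : 0 ≤ M)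
    (hMS : M * (2 * Real.exp 1 / δ) ≤ 1 / 2)
    (hA : ∀ i j : ℤ, ‖A i j‖ ≤ M * Real.exp (-ρ * |(i : ℝ) - (j : ℝ)|))
    (m : ℕ) (hm : 1 ≤ m) (i j : ℤ) :
    Summable (fun k : ℤ => ‖matPow A m i k * A k j‖) := by
  have hb := pow_bound ρ δ M A hδ hδ1 hδρ hM0 hMS hA m hm
  set C : ℝ := M * (1 / 2 : ℝ) ^ (m - 1) * M with hC
  have hconv := conv_lemma ρ δ hδ hδ1 hδρ i j
  have hgsum : Summable (fun k : ℤ => C * (Real.exp (-(ρ - δ) * |(i : ℝ) - (k : ℝ)|) *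
      Real.exp (-ρ * |(k : ℝ) - (j : ℝ)|))) := hconv.1.mul_left _
  refine Summable.of_nonneg_of_le (fun k => norm_nonneg _) (fun k => ?_) hgsum
  rw [norm_mul]
  calc ‖matPow A m i k‖ * ‖A k j‖
      ≤ (M * (1 / 2 : ℝ) ^ (m - 1) * Real.exp (-(ρ - δ) * |(i : ℝ) - (k : ℝ)|)) *
        (M * Real.exp (-ρ * |(k : ℝ) - (j : ℝ)|)) :=
        mul_le_mul (hb i k) (hA k j) (norm_nonneg _) (by positivity)
    _ = C * (Real.exp (-(ρ - δ) * |(i : ℝ) - (k : ℝ)|) *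
          Real.exp (-ρ * |(k : ℝ) - (j : ℝ)|)) := by ring

end Main

/-- Entrywise exponential bound for `B = e^A - Id = ∑_{m ≥ 1} A^m / m!` when `A` has
exponentially off-diagonal decay of rate `ρ` with a sufficiently small constant `M`:
there is `C₀ ≥ 1` such that whenever `0 < δ ≤ 1`, `δ < ρ` and `M ≤ δ/(2 e C₀)`,
all the matrix-power series converge absolutely and
`|B(i,j)| ≤ 2 M e^{-(ρ-δ)|i-j|}`. -/
theorem matrix_exponential_decay :
    ∃ C₀ : ℝ, 1 ≤ C₀ ∧
      ∀ (ρ δ M : ℝ), 0 < δ → δ ≤ 1 → δ < ρ → 0 ≤ M →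
        M ≤ δ / (2 * Real.exp 1 * C₀) →
      ∀ A : ℤ → ℤ → ℂ,
        (∀ i j : ℤ, ‖A i j‖ ≤ M * Real.exp (-ρ * |(i : ℝ) - (j : ℝ)|)) →
      ∀ i j : ℤ,
        (∀ m : ℕ, 1 ≤ m → Summable (fun k : ℤ => ‖matPow A m i k * A k j‖)) ∧
        Summable (fun m : ℕ => ‖matPow A (m + 1) i j / ((m + 1).factorial : ℂ)‖) ∧
        ‖∑' m : ℕ, matPow A (m + 1) i j / ((m + 1).factorial : ℂ)‖ ≤
          2 * M * Real.exp (-(ρ - δ) * |(i : ℝ) - (j : ℝ)|) := by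
  refine ⟨2, by norm_num, ?_⟩
  intro ρ δ M hδ hδ1 hδρ hM0 hM A hA i j
  have hMS : M * (2 * Real.exp 1 / δ) ≤ 1 / 2 := by
    have h1 : M * (2 * Real.exp 1 / δ) ≤ (δ / (2 * Real.exp 1 * 2)) * (2 * Real.exp 1 / δ) :=
      mul_le_mul_of_nonneg_right hM (by positivity)
    have h2 : (δ / (2 * Real.exp 1 * 2)) * (2 * Real.exp 1 / δ) = 1 / 2 := by
      have hδ' : δ ≠ 0 := ne_of_gt hδ
      have he : Real.exp 1 ≠ 0 := ne_of_gt (Real.exp_pos 1)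
      field_simp
    linarith
  have hb := pow_bound ρ δ M A hδ hδ1 hδρ hM0 hMS hA
  have hterm : ∀ m : ℕ, ‖matPow A (m + 1) i j / ((m + 1).factorial : ℂ)‖ ≤
      (M * Real.exp (-(ρ - δ) * |(i : ℝ) - (j : ℝ)|)) * (1 / 2 : ℝ) ^ m := by
    intro m
    rw [norm_div]
    have hf : (1 : ℝ) ≤ ‖(((m + 1).factorial : ℕ) : ℂ)‖ := by
      rw [Complex.norm_natCast]
      exact_mod_cast Nat.one_le_iff_ne_zero.mpr (Nat.factorial_ne_zero _)
    have hbm := hb (m + 1) (Nat.le_add_left 1 m) i j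
    simp only [Nat.add_sub_cancel] at hbm
    calc ‖matPow A (m + 1) i j‖ / ‖(((m + 1).factorial : ℕ) : ℂ)‖
        ≤ ‖matPow A (m + 1) i j‖ :=
          div_le_self (norm_nonneg _) hf
      _ ≤ M * (1 / 2 : ℝ) ^ m * Real.exp (-(ρ - δ) * |(i : ℝ) - (j : ℝ)|) := hbm
      _ = (M * Real.exp (-(ρ - δ) * |(i : ℝ) - (j : ℝ)|)) * (1 / 2 : ℝ) ^ m := by ring
  have hgeo : Summable (fun m : ℕ => (M * Real.exp (-(ρ - δ) * |(i : ℝ) - (j : ℝ)|)) *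
      (1 / 2 : ℝ) ^ m) :=
    (summable_geometric_of_lt_one (by norm_num) (by norm_num)).mul_left _
  have hsum2 : Summable (fun m : ℕ => ‖matPow A (m + 1) i j / ((m + 1).factorial : ℂ)‖) :=
    Summable.of_nonneg_of_le (fun m => norm_nonneg _) hterm hgeo
  refine ⟨fun m hm => pow_summable ρ δ M A hδ hδ1 hδρ hM0 hMS hA m hm i j, hsum2, ?_⟩
  calc ‖∑' m : ℕ, matPow A (m + 1) i j / ((m + 1).factorial : ℂ)‖
      ≤ ∑' m : ℕ, ‖matPow A (m + 1) i j / ((m + 1).factorial : ℂ)‖ :=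
        norm_tsum_le_tsum_norm hsum2
    _ ≤ ∑' m : ℕ, (M * Real.exp (-(ρ - δ) * |(i : ℝ) - (j : ℝ)|)) * (1 / 2 : ℝ) ^ m :=
        Summable.tsum_le_tsum hterm hsum2 hgeo
    _ = (M * Real.exp (-(ρ - δ) * |(i : ℝ) - (j : ℝ)|)) * ∑' m : ℕ, (1 / 2 : ℝ) ^ m :=
        tsum_mul_left
    _ = 2 * M * Real.exp (-(ρ - δ) * |(i : ℝ) - (j : ℝ)|) := by
        rw [tsum_geometric_of_lt_one (by norm_num) (by norm_num)]
        norm_num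
        ring
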